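/- For 3 ≤ r ≤ n−3, the image of the linear map Trop(φ_r): ℝ^(C(n,2)) → ℝ^(C(n,r)) (whose I-coordinate is Σ_{{i,j}⊆I} x_{ij}) is contained in the kernel of every cube linear form Σ_{K∈B} x_{J⊔K} − Σ_{K∈W} x_{J⊔K}. -/
import Mathlib


open scoped BigOperators

/-- Parity of a vertex of the 3-cube `Q₃` (giving its bipartition `B ⊔ W`). -/
def cubeEven (x : Fin 3 → Bool) : Prop :=
  (Finset.univ.filter fun i => x i).card % 2 = 0

instance : DecidablePred cubeEven := fun x => by unfold cubeEven; infer_instance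

section
variable {n : ℕ} (f : (Fin 3 → Bool) → Finset (Fin n))

def Adj (v w : Fin 3 → Bool) : Prop := ∃! i, v i ≠ w i

instance : ∀ v w, Decidable (Adj v w) := fun v w => by
  unfold Adj ExistsUnique; infer_instance

def flp (v : Fin 3 → Bool) (j : Fin 3) : Fin 3 → Bool := Function.update v j (!v j)

lemma adj_flp : ∀ (v : Fin 3 → Bool) (j : Fin 3), Adj v (flp v j) := by decide
lemma flp_ne_adj : ∀ (v : Fin 3 → Bool) (i j : Fin 3), i ≠ j → ¬ Adj (flp v i) (flp v j) := by decide
lemma adj_ne : ∀ v w : Fin 3 → Bool, Adj v w → v ≠ w := by decide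
lemma flp_inj : ∀ (v : Fin 3 → Bool) (i j : Fin 3), i ≠ j → flp v i ≠ flp v j := by decide
lemma adj_parity : ∀ v w : Fin 3 → Bool, Adj v w → (cubeEven v ↔ ¬ cubeEven w) := by decide
lemma no_triangle : ∀ u v w : Fin 3 → Bool, Adj u v → Adj u w → Adj v w → False := by decide

lemma sum_eps : ∑ v : Fin 3 → Bool, (if cubeEven v then (1:ℝ) else -1) = 0 := by
  rw [Finset.sum_ite, Finset.sum_const, Finset.sum_const]
  have h1 : (Finset.univ.filter cubeEven).card = 4 := by decide
  have h2 : (Finset.univ.filter (fun v => ¬ cubeEven v)).card = 4 := by decide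
  rw [h1, h2]; norm_num

variable (hcard3 : ∀ v, (f v).card = 3)
  (hfinj : Function.Injective f)
  (hadj : ∀ v w : Fin 3 → Bool, (∃! i, v i ≠ w i) ↔ (f v ∩ f w).card = 2)

include hcard3 hfinj hadj

lemma key_adj : ∀ v w (a b : Fin n), a ≠ b → v ≠ w → a ∈ f v → b ∈ f v → a ∈ f w →
    b ∈ f w → Adj v w := by
  intro v w a b hab hvw hav hbv haw hbw
  have hsub : ({a, b} : Finset (Fin n)) ⊆ f v ∩ f w := by
    intro c hc
    rcases Finset.mem_insert.1 hc with rfl | hc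
    · exact Finset.mem_inter.2 ⟨hav, haw⟩
    · rcases Finset.mem_singleton.1 hc with rfl
      exact Finset.mem_inter.2 ⟨hbv, hbw⟩
  have h2 : 2 ≤ (f v ∩ f w).card := by
    rw [← Finset.card_pair hab]; exact Finset.card_le_card hsub
  by_contra hA
  have hne2 : (f v ∩ f w).card ≠ 2 := fun hh => hA ((hadj v w).mpr hh)
  have h3 : (f v ∩ f w).card ≤ 3 := by
    calc (f v ∩ f w).card ≤ (f v).card := Finset.card_le_card Finset.inter_subset_left
    _ = 3 := hcard3 v
  have hc3 : (f v ∩ f w).card = 3 := by omega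
  have heq : f v ∩ f w = f v :=
    Finset.eq_of_subset_of_card_le Finset.inter_subset_left (by rw [hc3, hcard3])
  have hsub2 : f v ⊆ f w := by rw [← heq]; exact Finset.inter_subset_right
  exact hvw (hfinj (Finset.eq_of_subset_of_card_le hsub2 (by rw [hcard3, hcard3])))

lemma pair_balance : ∀ a b : Fin n, a ≠ b →
    ∑ v : Fin 3 → Bool, ((if cubeEven v then (1:ℝ) else -1) *
      (if a ∈ f v ∧ b ∈ f v then 1 else 0)) = 0 := by
  intro a b hab
  have hrw : ∑ v : Fin 3 → Bool, ((if cubeEven v then (1:ℝ) else -1) *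
      (if a ∈ f v ∧ b ∈ f v then 1 else 0)) =
      ∑ v ∈ Finset.univ.filter (fun v => a ∈ f v ∧ b ∈ f v),
        (if cubeEven v then (1:ℝ) else -1) := by
    rw [Finset.sum_filter]
    apply Finset.sum_congr rfl
    intro v _
    by_cases h : a ∈ f v ∧ b ∈ f v <;> simp [h]
  rw [hrw]
  rcases Finset.eq_empty_or_nonempty (Finset.univ.filter (fun v => a ∈ f v ∧ b ∈ f v))
    with he | ⟨v, hv⟩
  · rw [he, Finset.sum_empty]
  · simp only [Finset.mem_filter] at hv
    obtain ⟨-, hav, hbv⟩ := hv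
    -- find adjacent neighbor also containing a, b
    have hP : ∀ j, (f v ∩ f (flp v j)) ∈ (f v).powersetCard 2 := by
      intro j
      rw [Finset.mem_powersetCard]
      exact ⟨Finset.inter_subset_left, (hadj v (flp v j)).mp (adj_flp v j)⟩
    have hinj : Set.InjOn (fun j => f v ∩ f (flp v j)) ↑(Finset.univ : Finset (Fin 3)) := by
      intro i _ j _ hij
      by_contra hne
      have h2 : (f v ∩ f (flp v i)).card = 2 := (hadj _ _).mp (adj_flp v i)
      obtain ⟨c, d, hcd, hset⟩ := Finset.card_eq_two.1 h2
      have hci : c ∈ f v ∩ f (flp v i) := by rw [hset]; simp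
      have hdi : d ∈ f v ∩ f (flp v i) := by rw [hset]; simp
      have hij' : f v ∩ f (flp v i) = f v ∩ f (flp v j) := hij
      have hcj : c ∈ f v ∩ f (flp v j) := by rw [← hij']; exact hci
      have hdj : d ∈ f v ∩ f (flp v j) := by rw [← hij']; exact hdi
      have hne' : flp v i ≠ flp v j := flp_inj v i j hne
      exact flp_ne_adj v i j hne
        (key_adj f hcard3 hfinj hadj _ _ c d hcd hne'
          (Finset.mem_inter.1 hci).2 (Finset.mem_inter.1 hdi).2
          (Finset.mem_inter.1 hcj).2 (Finset.mem_inter.1 hdj).2)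
    have himg : Finset.image (fun j => f v ∩ f (flp v j)) Finset.univ =
        (f v).powersetCard 2 := by
      apply Finset.eq_of_subset_of_card_le
      · intro s hs
        obtain ⟨j, -, rfl⟩ := Finset.mem_image.1 hs
        exact hP j
      · rw [Finset.card_image_of_injOn hinj, Finset.card_powersetCard, hcard3]
        simp
    have hmem : ({a, b} : Finset (Fin n)) ∈ (f v).powersetCard 2 := by
      rw [Finset.mem_powersetCard]
      refine ⟨?_, Finset.card_pair hab⟩
      intro c hc
      rcases Finset.mem_insert.1 hc with rfl | hc
      · exact hav
      · rcases Finset.mem_singleton.1 hc with rfl; exact hbv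
    rw [← himg] at hmem
    obtain ⟨j, -, hj⟩ := Finset.mem_image.1 hmem
    obtain ⟨w, hAvw, hjw⟩ : ∃ w, Adj v w ∧ f v ∩ f w = {a, b} :=
      ⟨flp v j, adj_flp v j, hj⟩
    have haw : a ∈ f w := (Finset.mem_inter.1 (by rw [hjw]; simp)).2
    have hbw : b ∈ f w := (Finset.mem_inter.1 (by rw [hjw]; simp)).2
    have hvw : v ≠ w := adj_ne v w hAvw
    have hV : Finset.univ.filter (fun u => a ∈ f u ∧ b ∈ f u) = {v, w} := by
      apply Finset.Subset.antisymm
      · intro u hu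
        simp only [Finset.mem_filter] at hu
        obtain ⟨-, hau, hbu⟩ := hu
        simp only [Finset.mem_insert, Finset.mem_singleton]
        by_contra hcon
        push_neg at hcon
        obtain ⟨huv, huw⟩ := hcon
        exact no_triangle u v w
          (key_adj f hcard3 hfinj hadj u v a b hab huv hau hbu hav hbv)
          (key_adj f hcard3 hfinj hadj u w a b hab huw hau hbu haw hbw) hAvw
      · intro u hu
        simp only [Finset.mem_insert, Finset.mem_singleton] at hu
        rcases hu with rfl | rfl <;> simp [hav, hbv, haw, hbw]
    rw [hV, Finset.sum_pair hvw]
    have hpar : cubeEven v ↔ ¬ cubeEven w := adj_parity v w hAvw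
    by_cases hcv : cubeEven v
    · rw [if_pos hcv, if_neg (hpar.1 hcv)]; ring
    · rw [if_neg hcv, if_pos (by by_contra hq; exact hcv (hpar.2 hq))]; ring

lemma single_balance : ∀ a : Fin n,
    ∑ v : Fin 3 → Bool, ((if cubeEven v then (1:ℝ) else -1) *
      (if a ∈ f v then 1 else 0)) = 0 := by
  intro a
  have h0 : ∑ b ∈ Finset.univ.erase a, ∑ v : Fin 3 → Bool,
      ((if cubeEven v then (1:ℝ) else -1) * (if a ∈ f v ∧ b ∈ f v then 1 else 0)) = 0 := by
    apply Finset.sum_eq_zero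
    intro b hb
    exact pair_balance f hcard3 hfinj hadj a b (Ne.symm (Finset.mem_erase.1 hb).1)
  rw [Finset.sum_comm] at h0
  have h1 : ∀ v : Fin 3 → Bool, ∑ b ∈ Finset.univ.erase a,
      ((if cubeEven v then (1:ℝ) else -1) * (if a ∈ f v ∧ b ∈ f v then 1 else 0)) =
      2 * ((if cubeEven v then (1:ℝ) else -1) * (if a ∈ f v then 1 else 0)) := by
    intro v
    rw [← Finset.mul_sum]
    by_cases hav : a ∈ f v
    · have : ∑ b ∈ Finset.univ.erase a, (if a ∈ f v ∧ b ∈ f v then (1:ℝ) else 0) = 2 := by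
        have hsimp : ∀ b : Fin n, (if a ∈ f v ∧ b ∈ f v then (1:ℝ) else 0) =
            if b ∈ f v then 1 else 0 := fun b => by simp [hav]
        calc ∑ b ∈ Finset.univ.erase a, (if a ∈ f v ∧ b ∈ f v then (1:ℝ) else 0)
            = ∑ b ∈ Finset.univ.erase a, (if b ∈ f v then (1:ℝ) else 0) :=
              Finset.sum_congr rfl (fun b _ => hsimp b)
          _ = (((Finset.univ.erase a).filter (· ∈ f v)).card : ℝ) := Finset.sum_boole _ _
          _ = 2 := by
              have he : (Finset.univ.erase a).filter (· ∈ f v) = (f v).erase a := by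
                ext c; simp [and_comm]
              rw [he, Finset.card_erase_of_mem hav, hcard3]
              norm_num
      rw [this]; rw [if_pos hav]; ring
    · have : ∑ b ∈ Finset.univ.erase a, (if a ∈ f v ∧ b ∈ f v then (1:ℝ) else 0) = 0 := by
        apply Finset.sum_eq_zero; intro b _; simp [hav]
      rw [this]; rw [if_neg hav]; ring
  rw [Finset.sum_congr rfl (fun v _ => h1 v), ← Finset.mul_sum] at h0
  linarith
end

/-- For `3 ≤ r ≤ n−3`, the image of the linear map
`Trop(φ_r) : ℝ^(C(n,2)) → ℝ^(C(n,r))` (whose `I`-coordinate is `Σ_{{i,j}⊆I} x_{ij}`)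
is contained in the kernel of every cube linear form
`Σ_{K∈B} x_{J⊔K} − Σ_{K∈W} x_{J⊔K}`.  A cube on a 6-subset `I` of `[n]` is encoded by
an injective `f : Q₃ → {3-subsets of I}` matching adjacency; `B`, `W` are its even-
and odd-parity classes, and `J` ranges over `(r−3)`-subsets of `[n]\I`. -/

theorem stmt_15 (n r : ℕ) (hr : 3 ≤ r) (hrn : r ≤ n - 3)
    (T : ({J : Finset (Fin n) // J.card = 2} → ℝ) →
         ({I : Finset (Fin n) // I.card = r} → ℝ))
    (hT : ∀ x I, T x I = ∑ J : {J : Finset (Fin n) // J.card = 2},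
      if J.1 ⊆ I.1 then x J else 0) :
    ∀ (x : {J : Finset (Fin n) // J.card = 2} → ℝ)
      (I J : Finset (Fin n)) (f : (Fin 3 → Bool) → Finset (Fin n)),
        I.card = 6 → J.card = r - 3 → Disjoint J I →
        (∀ v, f v ⊆ I ∧ (f v).card = 3) →
        Function.Injective f →
        (∀ v w : Fin 3 → Bool, (∃! i, v i ≠ w i) ↔ (f v ∩ f w).card = 2) →
        ∀ h : ∀ v, (J ∪ f v).card = r,
          ∑ v : Fin 3 → Bool,
            (if cubeEven v then T x ⟨J ∪ f v, h v⟩ else -(T x ⟨J ∪ f v, h v⟩)) = 0 := by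
  intro x I J f hI hJ hdisj hfI hfinj hadj h
  have hcard3 : ∀ v, (f v).card = 3 := fun v => (hfI v).2
  have step1 : ∀ v : Fin 3 → Bool,
      (if cubeEven v then T x ⟨J ∪ f v, h v⟩ else -(T x ⟨J ∪ f v, h v⟩)) =
      ∑ A : {J' : Finset (Fin n) // J'.card = 2},
        (if cubeEven v then (1:ℝ) else -1) * (if A.1 ⊆ J ∪ f v then x A else 0) := by
    intro v
    rw [hT]
    by_cases hcv : cubeEven v
    · simp only [if_pos hcv, one_mul]
    · simp only [if_neg hcv, neg_one_mul, ← Finset.sum_neg_distrib]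
  rw [Finset.sum_congr rfl (fun v _ => step1 v), Finset.sum_comm]
  apply Finset.sum_eq_zero
  intro A _
  obtain ⟨a, b, hab, hA⟩ := Finset.card_eq_two.1 A.2
  have hcond : ∀ v, (A.1 ⊆ J ∪ f v) ↔ ((a ∈ J ∨ a ∈ f v) ∧ (b ∈ J ∨ b ∈ f v)) := by
    intro v
    rw [hA]
    simp [Finset.insert_subset_iff, Finset.mem_union]
  have step2 : ∀ v : Fin 3 → Bool,
      (if cubeEven v then (1:ℝ) else -1) * (if A.1 ⊆ J ∪ f v then x A else 0) =
      ((if cubeEven v then (1:ℝ) else -1) * (if A.1 ⊆ J ∪ f v then 1 else 0)) * x A := by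
    intro v
    by_cases hc : A.1 ⊆ J ∪ f v
    · rw [if_pos hc, if_pos hc]; ring
    · rw [if_neg hc, if_neg hc]; ring
  rw [Finset.sum_congr rfl (fun v _ => step2 v), ← Finset.sum_mul]
  suffices hz : ∑ v : Fin 3 → Bool,
      (if cubeEven v then (1:ℝ) else -1) * (if A.1 ⊆ J ∪ f v then 1 else 0) = 0 by
    rw [hz, zero_mul]
  by_cases haJ : a ∈ J <;> by_cases hbJ : b ∈ J
  · -- both in J : condition always true
    have hred : ∀ v : Fin 3 → Bool, (if cubeEven v then (1:ℝ) else -1) *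
        (if A.1 ⊆ J ∪ f v then 1 else 0) = (if cubeEven v then (1:ℝ) else -1) := by
      intro v
      rw [if_pos ((hcond v).2 ⟨Or.inl haJ, Or.inl hbJ⟩), mul_one]
    rw [Finset.sum_congr rfl (fun v _ => hred v)]
    exact sum_eps
  · -- a ∈ J, b ∉ J : condition ↔ b ∈ f v
    have hred : ∀ v : Fin 3 → Bool, (if A.1 ⊆ J ∪ f v then (1:ℝ) else 0) =
        (if b ∈ f v then 1 else 0) := by
      intro v
      by_cases hb : b ∈ f v
      · rw [if_pos hb, if_pos ((hcond v).2 ⟨Or.inl haJ, Or.inr hb⟩)]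
      · rw [if_neg hb, if_neg (fun hc => ((hcond v).1 hc).2.elim hbJ hb)]
    rw [Finset.sum_congr rfl (fun v _ => by rw [hred v])]
    exact single_balance f hcard3 hfinj hadj b
  · -- b ∈ J, a ∉ J : condition ↔ a ∈ f v
    have hred : ∀ v : Fin 3 → Bool, (if A.1 ⊆ J ∪ f v then (1:ℝ) else 0) =
        (if a ∈ f v then 1 else 0) := by
      intro v
      by_cases ha : a ∈ f v
      · rw [if_pos ha, if_pos ((hcond v).2 ⟨Or.inr ha, Or.inl hbJ⟩)]
      · rw [if_neg ha, if_neg (fun hc => ((hcond v).1 hc).1.elim haJ ha)]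
    rw [Finset.sum_congr rfl (fun v _ => by rw [hred v])]
    exact single_balance f hcard3 hfinj hadj a
  · -- neither in J : condition ↔ a ∈ f v ∧ b ∈ f v
    have hred : ∀ v : Fin 3 → Bool, (if A.1 ⊆ J ∪ f v then (1:ℝ) else 0) =
        (if a ∈ f v ∧ b ∈ f v then 1 else 0) := by
      intro v
      by_cases hc : a ∈ f v ∧ b ∈ f v
      · rw [if_pos hc, if_pos ((hcond v).2 ⟨Or.inr hc.1, Or.inr hc.2⟩)]
      · rw [if_neg hc, if_neg (fun hs => hc ⟨((hcond v).1 hs).1.resolve_left haJ,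
          ((hcond v).1 hs).2.resolve_left hbJ⟩)]
    rw [Finset.sum_congr rfl (fun v _ => by rw [hred v])]
    exact pair_balance f hcard3 hfinj hadj a b hab
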